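/- Let n ≥ 4 and A, B, C, D ∈ Mₙ(ℂ) with tr(A) = tr(B), tr(C) = tr(D). If the map Φ(X) = AX + XB + (CX + XD)ᵀ on Mₙ(ℂ) equals X ↦ tr(EX)·F for some fixed E, F ∈ Mₙ(ℂ), then A = B = C = D = 0. -/

import Mathlib

open Matrix

theorem stmt9 (n : ℕ) (hn : 4 ≤ n) (A B C D E F : Matrix (Fin n) (Fin n) ℂ)
    (htrAB : A.trace = B.trace) (htrCD : C.trace = D.trace)
    (h : ∀ X : Matrix (Fin n) (Fin n) ℂ,
      A * X + X * B + (C * X + X * D)ᵀ = (E * X).trace • F) :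
    A = 0 ∧ B = 0 ∧ C = 0 ∧ D = 0 := by
  have key : ∀ k l p q : Fin n,
      ((if l = q then A p k else 0) + if k = p then B l q else 0) +
        ((if l = p then C q k else 0) + if k = q then D l p else 0)
        = E l k * F p q := by
    intro k l p q
    have h1 := congrFun (congrFun (h (Matrix.single k l 1)) p) q
    simpa [Matrix.add_apply, Matrix.mul_apply, Matrix.single_apply, Matrix.transpose_apply,
      Matrix.smul_apply, Matrix.trace, Matrix.diag, ite_and, Finset.sum_ite_eq, Finset.sum_ite_eq',
      smul_eq_mul] using h1
  have fresh2 : ∀ k l : Fin n, ∃ m1 m2 : Fin n, m1 ≠ m2 ∧ m1 ≠ k ∧ m1 ≠ l ∧ m2 ≠ k ∧ m2 ≠ l := by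
    intro k l
    have hc2 : ({k, l} : Finset (Fin n)).card ≤ 2 := by
      apply le_trans (Finset.card_insert_le _ _); simp
    have hcard : 1 < (({k, l} : Finset (Fin n))ᶜ).card := by
      have hcc := Finset.card_compl ({k, l} : Finset (Fin n))
      simp only [Fintype.card_fin] at hcc
      omega
    obtain ⟨m1, hm1, m2, hm2, hne⟩ := Finset.one_lt_card.mp hcard
    simp only [Finset.mem_compl, Finset.mem_insert, Finset.mem_singleton, not_or] at hm1 hm2
    exact ⟨m1, m2, hne, hm1.1, hm1.2, hm2.1, hm2.2⟩
  have hZ : ∀ k l p q : Fin n, l ≠ q → k ≠ p → l ≠ p → k ≠ q → E l k * F p q = 0 := by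
    intro k l p q h1 h2 h3 h4
    have hk := key k l p q
    simpa [h1, h2, h3, h4] using hk.symm
  -- off-diagonal entries vanish
  have hAoff : ∀ p k : Fin n, p ≠ k → A p k = 0 := by
    intro p k hpk
    by_contra hne
    obtain ⟨j1, j2, hj, hj1p, hj1k, hj2p, hj2k⟩ := fresh2 p k
    have e1 : E j1 k * F p j1 = A p k := by
      have hk := key k j1 p j1
      simpa [hpk.symm, hj1p, hj1k, hj1k.symm] using hk.symm
    have e2 : E j2 k * F p j2 = A p k := by
      have hk := key k j2 p j2
      simpa [hpk.symm, hj2p, hj2k, hj2k.symm] using hk.symm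
    have ez : E j1 k * F p j2 = 0 := hZ k j1 p j2 hj hpk.symm hj1p hj2k.symm
    have hP1 : E j1 k * F p j1 ≠ 0 := by rw [e1]; exact hne
    have hP2 : E j2 k * F p j2 ≠ 0 := by rw [e2]; exact hne
    exact mul_ne_zero (left_ne_zero_of_mul hP1) (right_ne_zero_of_mul hP2) ez
  have hBoff : ∀ l q : Fin n, l ≠ q → B l q = 0 := by
    intro l q hlq
    by_contra hne
    obtain ⟨k1, k2, hk, hk1l, hk1q, hk2l, hk2q⟩ := fresh2 l q
    have e1 : E l k1 * F k1 q = B l q := by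
      have hh := key k1 l k1 q
      simpa [hlq, hk1l.symm, hk1q] using hh.symm
    have e2 : E l k2 * F k2 q = B l q := by
      have hh := key k2 l k2 q
      simpa [hlq, hk2l.symm, hk2q] using hh.symm
    have ez : E l k1 * F k2 q = 0 := hZ k1 l k2 q hlq hk hk2l.symm hk1q
    have hP1 : E l k1 * F k1 q ≠ 0 := by rw [e1]; exact hne
    have hP2 : E l k2 * F k2 q ≠ 0 := by rw [e2]; exact hne
    exact mul_ne_zero (left_ne_zero_of_mul hP1) (right_ne_zero_of_mul hP2) ez
  have hCoff : ∀ q k : Fin n, q ≠ k → C q k = 0 := by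
    intro q k hqk
    by_contra hne
    obtain ⟨l1, l2, hl, hl1q, hl1k, hl2q, hl2k⟩ := fresh2 q k
    have e1 : E l1 k * F l1 q = C q k := by
      have hh := key k l1 l1 q
      simpa [hl1q, hl1k.symm, hqk.symm] using hh.symm
    have e2 : E l2 k * F l2 q = C q k := by
      have hh := key k l2 l2 q
      simpa [hl2q, hl2k.symm, hqk.symm] using hh.symm
    have ez : E l1 k * F l2 q = 0 := hZ k l1 l2 q hl1q hl2k.symm hl hqk.symm
    have hP1 : E l1 k * F l1 q ≠ 0 := by rw [e1]; exact hne
    have hP2 : E l2 k * F l2 q ≠ 0 := by rw [e2]; exact hne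
    exact mul_ne_zero (left_ne_zero_of_mul hP1) (right_ne_zero_of_mul hP2) ez
  have hDoff : ∀ l p : Fin n, l ≠ p → D l p = 0 := by
    intro l p hlp
    by_contra hne
    obtain ⟨k1, k2, hk, hk1l, hk1p, hk2l, hk2p⟩ := fresh2 l p
    have e1 : E l k1 * F p k1 = D l p := by
      have hh := key k1 l p k1
      simpa [hk1l.symm, hk1p, hlp] using hh.symm
    have e2 : E l k2 * F p k2 = D l p := by
      have hh := key k2 l p k2
      simpa [hk2l.symm, hk2p, hlp] using hh.symm
    have ez : E l k1 * F p k2 = 0 := hZ k1 l p k2 hk2l.symm hk1p hlp hk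
    have hP1 : E l k1 * F p k1 ≠ 0 := by rw [e1]; exact hne
    have hP2 : E l k2 * F p k2 ≠ 0 := by rw [e2]; exact hne
    exact mul_ne_zero (left_ne_zero_of_mul hP1) (right_ne_zero_of_mul hP2) ez
  -- diagonal relations
  have hABdiag : ∀ k l : Fin n, k ≠ l → A k k + B l l = 0 := by
    intro k l hkl
    by_contra hne
    have ekl : E l k * F k l = A k k + B l l := by
      have hh := key k l k l
      simpa [hkl, hkl.symm] using hh.symm
    have hE : E l k ≠ 0 := left_ne_zero_of_mul (by rw [ekl]; exact hne)
    obtain ⟨m1, m2, hm, hm1k, hm1l, hm2k, hm2l⟩ := fresh2 k l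
    have eB : E l k * F k m2 = B l m2 := by
      have hh := key k l k m2
      simpa [hm2l.symm, hkl.symm, hm2k.symm] using hh.symm
    have hFkm2 : F k m2 = 0 := by
      rw [hBoff l m2 hm2l.symm] at eB
      exact (mul_eq_zero.mp eB).resolve_left hE
    have eA : E l k * F m1 l = A m1 k := by
      have hh := key k l m1 l
      simpa [hm1k.symm, hm1l.symm, hkl] using hh.symm
    have hFm1l : F m1 l = 0 := by
      rw [hAoff m1 k hm1k] at eA
      exact (mul_eq_zero.mp eA).resolve_left hE
    have e2 : E m2 k * F k m2 = A k k + B m2 m2 := by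
      have hh := key k m2 k m2
      simpa [hm2k, hm2k.symm] using hh.symm
    have h2 : A k k + B m2 m2 = 0 := by rw [← e2, hFkm2, mul_zero]
    have e3 : E l m1 * F m1 l = A m1 m1 + B l l := by
      have hh := key m1 l m1 l
      simpa [hm1l, hm1l.symm] using hh.symm
    have h3 : A m1 m1 + B l l = 0 := by rw [← e3, hFm1l, mul_zero]
    have hFm1m2 : F m1 m2 = 0 :=
      (mul_eq_zero.mp (hZ k l m1 m2 hm2l.symm hm1k.symm hm1l.symm hm2k.symm)).resolve_left hE
    have e4 : E m2 m1 * F m1 m2 = A m1 m1 + B m2 m2 := by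
      have hh := key m1 m2 m1 m2
      simpa [hm, hm.symm] using hh.symm
    have h4 : A m1 m1 + B m2 m2 = 0 := by rw [← e4, hFm1m2, mul_zero]
    exact hne (by linear_combination h2 + h3 - h4)
  have hCDdiag : ∀ k l : Fin n, k ≠ l → C k k + D l l = 0 := by
    intro k l hkl
    by_contra hne
    have ekl : E l k * F l k = C k k + D l l := by
      have hh := key k l l k
      simpa [hkl, hkl.symm] using hh.symm
    have hE : E l k ≠ 0 := left_ne_zero_of_mul (by rw [ekl]; exact hne)
    have hF : F l k ≠ 0 := right_ne_zero_of_mul (by rw [ekl]; exact hne)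
    obtain ⟨m1, m2, hm, hm1k, hm1l, hm2k, hm2l⟩ := fresh2 k l
    have eD : E l k * F m2 k = D l m2 := by
      have hh := key k l m2 k
      simpa [hkl.symm, hm2k.symm, hm2l.symm] using hh.symm
    have hFm2k : F m2 k = 0 := by
      rw [hDoff l m2 hm2l.symm] at eD
      exact (mul_eq_zero.mp eD).resolve_left hE
    have e2 : E m2 k * F m2 k = C k k + D m2 m2 := by
      have hh := key k m2 m2 k
      simpa [hm2k, hm2k.symm] using hh.symm
    have h2 : C k k + D m2 m2 = 0 := by rw [← e2, hFm2k, mul_zero]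
    have eC : E l m1 * F l k = C k m1 := by
      have hh := key m1 l l k
      simpa [hkl.symm, hm1l, hm1k] using hh.symm
    have hElm1 : E l m1 = 0 := by
      rw [hCoff k m1 hm1k.symm] at eC
      exact (mul_eq_zero.mp eC).resolve_right hF
    have e3 : E l m1 * F l m1 = C m1 m1 + D l l := by
      have hh := key m1 l l m1
      simpa [hm1l, hm1l.symm] using hh.symm
    have h3 : C m1 m1 + D l l = 0 := by rw [← e3, hElm1, zero_mul]
    have hFm2m1 : F m2 m1 = 0 :=
      (mul_eq_zero.mp (hZ k l m2 m1 hm1l.symm hm2k.symm hm2l.symm hm1k.symm)).resolve_left hE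
    have e4 : E m2 m1 * F m2 m1 = C m1 m1 + D m2 m2 := by
      have hh := key m1 m2 m2 m1
      simpa [hm, hm.symm] using hh.symm
    have h4 : C m1 m1 + D m2 m2 = 0 := by rw [← e4, hFm2m1, mul_zero]
    exact hne (by linear_combination h2 + h3 - h4)
  -- constancy of diagonals
  have hn0 : (n : ℂ) ≠ 0 := Nat.cast_ne_zero.mpr (by omega)
  have hAconst : ∀ k k' : Fin n, A k k = A k' k' := by
    intro k k'
    obtain ⟨m1, _, _, hm1k, hm1k', _, _⟩ := fresh2 k k'
    have e1 := hABdiag k m1 hm1k.symm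
    have e2 := hABdiag k' m1 hm1k'.symm
    linear_combination e1 - e2
  have hBconst : ∀ l l' : Fin n, B l l = B l' l' := by
    intro l l'
    obtain ⟨m1, _, _, hm1l, hm1l', _, _⟩ := fresh2 l l'
    have e1 := hABdiag m1 l hm1l
    have e2 := hABdiag m1 l' hm1l'
    linear_combination e1 - e2
  have hCconst : ∀ k k' : Fin n, C k k = C k' k' := by
    intro k k'
    obtain ⟨m1, _, _, hm1k, hm1k', _, _⟩ := fresh2 k k'
    have e1 := hCDdiag k m1 hm1k.symm
    have e2 := hCDdiag k' m1 hm1k'.symm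
    linear_combination e1 - e2
  have hDconst : ∀ l l' : Fin n, D l l = D l' l' := by
    intro l l'
    obtain ⟨m1, _, _, hm1l, hm1l', _, _⟩ := fresh2 l l'
    have e1 := hCDdiag m1 l hm1l
    have e2 := hCDdiag m1 l' hm1l'
    linear_combination e1 - e2
  have i0 : Fin n := ⟨0, by omega⟩
  obtain ⟨j0, _, _, hj0, _, _, _⟩ := fresh2 i0 i0
  have trsum : ∀ M : Matrix (Fin n) (Fin n) ℂ, (∀ k k' : Fin n, M k k = M k' k') →
      M.trace = (n : ℂ) * M i0 i0 := by
    intro M hM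
    calc M.trace = ∑ k, M k k := by simp [Matrix.trace, Matrix.diag]
      _ = ∑ _k : Fin n, M i0 i0 := Finset.sum_congr rfl (fun k _ => hM k i0)
      _ = (n : ℂ) * M i0 i0 := by
          simp [Finset.sum_const, Fintype.card_fin, nsmul_eq_mul]
  have trA := trsum A hAconst
  have trB := trsum B hBconst
  have trC := trsum C hCconst
  have trD := trsum D hDconst
  have hAB0 : A i0 i0 + B i0 i0 = 0 := by
    have e1 := hABdiag i0 j0 hj0.symm
    have e2 := hBconst j0 i0
    linear_combination e1 - e2
  have hCD0 : C i0 i0 + D i0 i0 = 0 := by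
    have e1 := hCDdiag i0 j0 hj0.symm
    have e2 := hDconst j0 i0
    linear_combination e1 - e2
  have hA0 : A i0 i0 = 0 := by
    rw [trA, trB] at htrAB
    have hBi : B i0 i0 = A i0 i0 := mul_left_cancel₀ hn0 htrAB.symm
    have h2 : (2 : ℂ) * A i0 i0 = 0 := by linear_combination hAB0 - hBi
    exact (mul_eq_zero.mp h2).resolve_left two_ne_zero
  have hB0 : B i0 i0 = 0 := by linear_combination hAB0 - hA0
  have hC0 : C i0 i0 = 0 := by
    rw [trC, trD] at htrCD
    have hDi : D i0 i0 = C i0 i0 := mul_left_cancel₀ hn0 htrCD.symm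
    have h2 : (2 : ℂ) * C i0 i0 = 0 := by linear_combination hCD0 - hDi
    exact (mul_eq_zero.mp h2).resolve_left two_ne_zero
  have hD0 : D i0 i0 = 0 := by linear_combination hCD0 - hC0
  refine ⟨?_, ?_, ?_, ?_⟩ <;> ext i j
  · rcases eq_or_ne i j with rfl | hij
    · rw [Matrix.zero_apply, hAconst i i0, hA0]
    · rw [Matrix.zero_apply, hAoff i j hij]
  · rcases eq_or_ne i j with rfl | hij
    · rw [Matrix.zero_apply, hBconst i i0, hB0]
    · rw [Matrix.zero_apply, hBoff i j hij]
  · rcases eq_or_ne i j with rfl | hij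
    · rw [Matrix.zero_apply, hCconst i i0, hC0]
    · rw [Matrix.zero_apply, hCoff i j hij]
  · rcases eq_or_ne i j with rfl | hij
    · rw [Matrix.zero_apply, hDconst i i0, hD0]
    · rw [Matrix.zero_apply, hDoff i j hij]
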